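/- Let D and d be positive integers with d ≤ D, let P be a real D×d matrix with PᵀP = I_d, and write Q = PPᵀ. Let μ be a finite measure on [0,1] and let σ, φ, ψ : [0,1] → ℝ be bounded measurable functions of α ∈ [0,1] (with α the identity function). Assume ∫(α² + σ(α)²)dμ > 0 and ∫σ(α)²dμ > 0. Then the matrix W* = [∫(φ(α)α + ψ(α)σ(α))dμ / ∫(α² + σ(α)²)dμ]·Q + [∫ψ(α)σ(α)dμ / ∫σ(α)²dμ]·(I − Q) is the unique real D×D matrix W satisfying ∫[W(α²Q + σ(α)²I) − (φ(α)αQ + ψ(α)σ(α)I)]dμ = 0. -/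

import Mathlib

open MeasureTheory Matrix

attribute [local instance] Matrix.frobeniusNormedAddCommGroup Matrix.frobeniusNormedSpace

/-- the equilibrium weight
`W* = [∫(φα+ψσ)dμ / ∫(α²+σ²)dμ]·Q + [∫ψσdμ / ∫σ²dμ]·(I−Q)` is the unique matrix at
which the population gradient `∫[W(α²Q + σ²I) − (φαQ + ψσI)]dμ` vanishes. -/
theorem stmt_6 (D d : ℕ) (hD : 0 < D) (hd : 0 < d) (hdD : d ≤ D)
    (P : Matrix (Fin D) (Fin d) ℝ) (hP : Pᵀ * P = 1)
    (μ : Measure (Set.Icc (0:ℝ) 1)) [IsFiniteMeasure μ]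
    (σ φ ψ : Set.Icc (0:ℝ) 1 → ℝ)
    (hσm : Measurable σ) (hφm : Measurable φ) (hψm : Measurable ψ)
    (hσb : ∃ C, ∀ a, |σ a| ≤ C) (hφb : ∃ C, ∀ a, |φ a| ≤ C) (hψb : ∃ C, ∀ a, |ψ a| ≤ C)
    (hpos1 : 0 < ∫ a, ((a : ℝ) ^ 2 + σ a ^ 2) ∂μ)
    (hpos2 : 0 < ∫ a, σ a ^ 2 ∂μ)
    (Wstar : Matrix (Fin D) (Fin D) ℝ)
    (hWstar : Wstar =
      ((∫ a, (φ a * (a : ℝ) + ψ a * σ a) ∂μ) / (∫ a, ((a : ℝ) ^ 2 + σ a ^ 2) ∂μ)) • (P * Pᵀ)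
        + ((∫ a, ψ a * σ a ∂μ) / (∫ a, σ a ^ 2 ∂μ)) • (1 - P * Pᵀ)) :
    (∫ a, (Wstar * ((a : ℝ) ^ 2 • (P * Pᵀ) + σ a ^ 2 • 1)
        - ((φ a * (a : ℝ)) • (P * Pᵀ) + (ψ a * σ a) • 1)) ∂μ = 0) ∧
    ∀ W : Matrix (Fin D) (Fin D) ℝ,
      (∫ a, (W * ((a : ℝ) ^ 2 • (P * Pᵀ) + σ a ^ 2 • 1)
        - ((φ a * (a : ℝ)) • (P * Pᵀ) + (ψ a * σ a) • 1)) ∂μ = 0) → W = Wstar := by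
  set Q : Matrix (Fin D) (Fin D) ℝ := P * Pᵀ with hQdef
  have hQ : Q * Q = Q := by
    rw [hQdef, Matrix.mul_assoc, ← Matrix.mul_assoc Pᵀ, hP, Matrix.one_mul]
  -- integrability helper
  have hbdd : ∀ f : Set.Icc (0:ℝ) 1 → ℝ, Measurable f → (∃ C, ∀ a, |f a| ≤ C) →
      Integrable f μ := by
    rintro f hf ⟨C, hC⟩
    refine ⟨hf.aestronglyMeasurable, ?_⟩
    exact HasFiniteIntegral.of_bounded (C := C)
      (Filter.Eventually.of_forall fun a => by simpa using hC a)
  have hα : Measurable fun a : Set.Icc (0:ℝ) 1 => (a:ℝ) := measurable_subtype_coe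
  have hαb : ∀ a : Set.Icc (0:ℝ) 1, |(a:ℝ)| ≤ 1 := fun a => by
    rw [abs_le]; exact ⟨le_trans (by norm_num) a.2.1, a.2.2⟩
  obtain ⟨Cσ, hCσ⟩ := hσb
  obtain ⟨Cφ, hCφ⟩ := hφb
  obtain ⟨Cψ, hCψ⟩ := hψb
  have prodb : ∀ (f g : Set.Icc (0:ℝ) 1 → ℝ) (Cf Cg : ℝ), (∀ a, |f a| ≤ Cf) →
      (∀ a, |g a| ≤ Cg) → ∀ a, |f a * g a| ≤ Cf * Cg := by
    intro f g Cf Cg hf hg a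
    rw [abs_mul]
    exact mul_le_mul (hf a) (hg a) (abs_nonneg _) ((abs_nonneg _).trans (hf a))
  have i1 : Integrable (fun a : Set.Icc (0:ℝ) 1 => (a:ℝ)^2) μ := by
    refine hbdd _ (hα.pow_const 2) ⟨1, fun a => ?_⟩
    have := prodb _ _ 1 1 hαb hαb a
    simpa [sq, abs_mul] using this
  have i2 : Integrable (fun a : Set.Icc (0:ℝ) 1 => σ a ^ 2) μ := by
    refine hbdd _ (hσm.pow_const 2) ⟨Cσ * Cσ, fun a => ?_⟩
    have := prodb _ _ Cσ Cσ hCσ hCσ a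
    simpa [sq, abs_mul] using this
  have i3 : Integrable (fun a : Set.Icc (0:ℝ) 1 => φ a * (a:ℝ)) μ :=
    hbdd _ (hφm.mul hα) ⟨Cφ * 1, prodb _ _ Cφ 1 hCφ hαb⟩
  have i4 : Integrable (fun a : Set.Icc (0:ℝ) 1 => ψ a * σ a) μ :=
    hbdd _ (hψm.mul hσm) ⟨Cψ * Cσ, prodb _ _ Cψ Cσ hCψ hCσ⟩
  set A := ∫ a, ((a : ℝ)^2) ∂μ with hA
  set B := ∫ a, σ a ^ 2 ∂μ with hB
  set C := ∫ a, φ a * (a:ℝ) ∂μ with hC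
  set E := ∫ a, ψ a * σ a ∂μ with hE
  have hS1 : ∫ a, ((a : ℝ) ^ 2 + σ a ^ 2) ∂μ = A + B := integral_add i1 i2
  have hT1 : ∫ a, (φ a * (a : ℝ) + ψ a * σ a) ∂μ = C + E := integral_add i3 i4
  have hABpos : 0 < A + B := hS1 ▸ hpos1
  have hAB : A + B ≠ 0 := ne_of_gt hABpos
  have hBne : B ≠ 0 := ne_of_gt hpos2
  have hgrad : ∀ W : Matrix (Fin D) (Fin D) ℝ,
      (∫ a, (W * ((a : ℝ) ^ 2 • Q + σ a ^ 2 • 1)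
        - ((φ a * (a : ℝ)) • Q + (ψ a * σ a) • 1)) ∂μ)
      = A • (W * Q) + B • W - (C • Q + E • (1 : Matrix (Fin D) (Fin D) ℝ)) := by
    intro W
    have heq : ∀ a : Set.Icc (0:ℝ) 1,
        W * ((a : ℝ) ^ 2 • Q + σ a ^ 2 • 1) - ((φ a * (a : ℝ)) • Q + (ψ a * σ a) • 1)
        = ((a:ℝ)^2 • (W * Q) + σ a ^ 2 • W) - ((φ a * (a : ℝ)) • Q + (ψ a * σ a) • 1) := by
      intro a
      rw [Matrix.mul_add, Matrix.mul_smul, Matrix.mul_smul, Matrix.mul_one]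
    simp_rw [heq]
    have j1 :=
      (i1.smul_const (W * Q)).fun_add (i2.smul_const W)
    have j2 :=
      (i3.smul_const Q).fun_add (i4.smul_const (1 : Matrix (Fin D) (Fin D) ℝ))
    rw [integral_sub j1 j2,
      integral_add (i1.smul_const _) (i2.smul_const _),
      integral_add (i3.smul_const _) (i4.smul_const _),
      integral_smul_const, integral_smul_const, integral_smul_const, integral_smul_const]
  have hstar : A • (Wstar * Q) + B • Wstar - (C • Q + E • (1 : Matrix (Fin D) (Fin D) ℝ)) = 0 := by
    rw [hWstar, hS1, hT1]
    rw [Matrix.add_mul, Matrix.smul_mul, Matrix.smul_mul, Matrix.sub_mul, Matrix.one_mul, hQ,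
      sub_self, smul_zero, add_zero]
    have h1 : (C + E) / (A + B) * (A + B) = C + E := div_mul_cancel₀ _ hAB
    have h2 : E / B * B = E := div_mul_cancel₀ _ hBne
    match_scalars <;> field_simp <;> ring
  refine ⟨(hgrad Wstar).trans hstar, ?_⟩
  intro W hW
  have hW' : A • (W * Q) + B • W - (C • Q + E • (1 : Matrix (Fin D) (Fin D) ℝ)) = 0 :=
    (hgrad W).symm.trans hW
  have hdiff : A • ((W - Wstar) * Q) + B • (W - Wstar) = 0 := by
    have := sub_eq_zero.mpr (hW'.trans hstar.symm)
    rw [Matrix.sub_mul, smul_sub, smul_sub]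
    calc A • (W * Q) - A • (Wstar * Q) + (B • W - B • Wstar)
        = (A • (W * Q) + B • W - (C • Q + E • (1 : Matrix (Fin D) (Fin D) ℝ)))
          - (A • (Wstar * Q) + B • Wstar - (C • Q + E • (1 : Matrix (Fin D) (Fin D) ℝ))) := by abel
      _ = 0 := by rw [hW', hstar, sub_zero]
  have hVQ : (W - Wstar) * Q = 0 := by
    have h := congrArg (fun M => M * Q) hdiff
    simp only [Matrix.add_mul, Matrix.smul_mul, Matrix.zero_mul, Matrix.mul_assoc, hQ] at h
    rw [← add_smul] at h
    exact (smul_eq_zero.mp h).resolve_left hAB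
  have hVzero : W - Wstar = 0 := by
    rw [hVQ, smul_zero, zero_add] at hdiff
    exact (smul_eq_zero.mp hdiff).resolve_left hBne
  exact sub_eq_zero.mp hVzero
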